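/- A first-order structure A is polymorphism-homogeneous if and only if A^k is homomorphism-homogeneous for every natural number k. -/

import Mathlib

/- Common framework: operations, relations, clones, preservation,
   primitive positive definability, polymorphism-homogeneity. -/

namespace PaperPH

/-- `Op A n` is the set of `n`-ary operations on `A`. -/
abbrev Op (A : Type*) (n : ℕ) := (Fin n → A) → A

/-- A family of operations on `A`, sorted by arity. -/
abbrev OpFamily (A : Type*) := ∀ n : ℕ, Set (Op A n)

/-- A family of relations on `A`, sorted by arity. -/
abbrev RelFamily (A : Type*) := ∀ n : ℕ, Set (Set (Fin n → A))

variable {A : Type*}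

/-- The `k`-ary partial operation given by the total map `h` together with domain `D`
preserves the `n`-ary relation `ρ`: for every `n × k` matrix all of whose rows lie in `D`
and all of whose columns lie in `ρ`, applying `h` to the rows yields a tuple in `ρ`. -/
def pPreserves {k n : ℕ} (D : Set (Fin k → A)) (h : Op A k) (ρ : Set (Fin n → A)) : Prop :=
  ∀ M : Fin n → Fin k → A,
    (∀ i, M i ∈ D) → (∀ j, (fun i => M i j) ∈ ρ) → (fun i => h (M i)) ∈ ρ

/-- `h` (with domain `D`) preserves every relation of the family `R`. -/
def pPreservesAll {k : ℕ} (D : Set (Fin k → A)) (h : Op A k) (R : RelFamily A) : Prop :=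
  ∀ n, ∀ ρ ∈ R n, pPreserves D h ρ

/-- The relational structure `⟨A; R⟩` is polymorphism-homogeneous: for every `k ≥ 1`,
every partial operation preserving all relations of `R` extends to a total operation
preserving all relations of `R`. -/
def RelPolyHom (R : RelFamily A) : Prop :=
  ∀ k, 1 ≤ k → ∀ (D : Set (Fin k → A)) (h : Op A k), pPreservesAll D h R →
    ∃ g : Op A k, (∀ x ∈ D, g x = h x) ∧ pPreservesAll Set.univ g R

/-- A family of operations is a clone if it contains all projections and is closed
under composition. -/
def IsClone (C : OpFamily A) : Prop :=
  (∀ (n : ℕ) (i : Fin n), (fun x => x i) ∈ C n) ∧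
  (∀ (n k : ℕ) (f : Op A n) (g : Fin n → Op A k),
    f ∈ C n → (∀ i, g i ∈ C k) → (fun x => f (fun i => g i x)) ∈ C k)

/-- The clone generated by a family `F` of operations; for an algebra with basic
operations `F` this is its clone `Clo(A)` of term operations. -/
def CloGen (F : OpFamily A) : OpFamily A :=
  fun n => { f | ∀ C : OpFamily A, IsClone C → (∀ m, F m ⊆ C m) → f ∈ C n }

/-- The graph `f•` of an `n`-ary operation `f`: the solution set of
`f(x_1,…,x_n) = x_{n+1}`. -/
def graphRel {n : ℕ} (f : Op A n) : Set (Fin (n + 1) → A) :=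
  { a | f (fun i => a i.castSucc) = a (Fin.last n) }

/-- `C•`: the family of graphs of the operations in `C`. -/
def Cdot (C : OpFamily A) : RelFamily A := fun m =>
  match m with
  | 0 => ∅
  | n + 1 => { ρ | ∃ f ∈ C n, ρ = graphRel f }

/-- `C°`: the family of solution sets `Sol(f,g) = {a | f(a) = g(a)}` of equations
between members of `C` of the same arity. -/
def Ccirc (C : OpFamily A) : RelFamily A := fun n =>
  { ρ | ∃ f ∈ C n, ∃ g ∈ C n, ρ = { a | f a = g a } }

/-- `Pol R`: all total operations preserving every relation in `R`. -/
def PolOps (R : RelFamily A) : OpFamily A := fun k =>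
  { h | pPreservesAll Set.univ h R }

/-- `Inv F`: all relations preserved by every operation in `F`. -/
def InvRels (F : OpFamily A) : RelFamily A := fun n =>
  { ρ | ∀ k, 1 ≤ k → ∀ h ∈ F k, pPreserves (Set.univ : Set (Fin k → A)) h ρ }

/-- `⟨R⟩_∄`: the relations definable by quantifier-free primitive positive formulas
over `R`, i.e. by conjunctions of atomic formulas `τ_i(x_{σ_i(1)},…,x_{σ_i(r_i)})`
with `τ_i ∈ R`. -/
def qfDef (R : RelFamily A) : RelFamily A := fun n =>
  { ρ | ∃ (t : ℕ) (r : Fin t → ℕ) (τ : ∀ i : Fin t, Set (Fin (r i) → A))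
      (σ : ∀ i : Fin t, Fin (r i) → Fin n),
      (∀ i, τ i ∈ R (r i)) ∧
      ρ = { a | ∀ i, (fun j => a (σ i j)) ∈ τ i } }

/-- `⟨R⟩_∃`: the relations definable by primitive positive formulas over `R`
(existentially quantified conjunctions of atomic formulas over `R`). -/
def ppDef (R : RelFamily A) : RelFamily A := fun n =>
  { ρ | ∃ (m t : ℕ) (r : Fin t → ℕ) (τ : ∀ i : Fin t, Set (Fin (r i) → A))
      (σ : ∀ i : Fin t, Fin (r i) → Fin (n + m)),
      (∀ i, τ i ∈ R (r i)) ∧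
      ρ = { a | ∃ b : Fin m → A, ∀ i, (fun j => Fin.append a b (σ i j)) ∈ τ i } }

/-- `B ⊆ A^k` is closed under the componentwise action of the operations in `C`,
i.e. `B` is a subalgebra (possibly empty) of the `k`-th power. -/
def ClosedUnder (C : OpFamily A) (k : ℕ) (B : Set (Fin k → A)) : Prop :=
  ∀ n, ∀ f ∈ C n, ∀ M : Fin n → Fin k → A,
    (∀ i, M i ∈ B) → (fun j => f (fun i => M i j)) ∈ B

/-- `h` is a homomorphism from the subalgebra `B ≤ A^k` to `A` (w.r.t. the
operations in `C`): it commutes with the componentwise action on tuples from `B`. -/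
def IsHomOn (C : OpFamily A) {k : ℕ} (B : Set (Fin k → A)) (h : Op A k) : Prop :=
  ∀ n, ∀ f ∈ C n, ∀ M : Fin n → Fin k → A, (∀ i, M i ∈ B) →
    h (fun j => f (fun i => M i j)) = f (fun i => h (M i))

/-- The algebra with clone of term operations `C` is polymorphism-homogeneous:
for every `k ≥ 1`, every homomorphism from a subalgebra of `A^k` to `A` extends
to a homomorphism `A^k → A`. -/
def AlgPolyHom (C : OpFamily A) : Prop :=
  ∀ k, 1 ≤ k → ∀ B : Set (Fin k → A), ClosedUnder C k B →
    ∀ h : Op A k, IsHomOn C B h →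
      ∃ g : Op A k, (∀ x ∈ B, g x = h x) ∧ IsHomOn C Set.univ g

/-- The algebra with clone of term operations `C` is homomorphism-homogeneous:
every homomorphism from a subalgebra of `A` to `A` extends to an endomorphism of `A`. -/
def AlgHomHom (C : OpFamily A) : Prop :=
  ∀ B : Set (Fin 1 → A), ClosedUnder C 1 B →
    ∀ h : Op A 1, IsHomOn C B h →
      ∃ g : Op A 1, (∀ x ∈ B, g x = h x) ∧ IsHomOn C Set.univ g

/-- Property (SDC): the algebraic sets (solution sets of systems of equations, i.e.
the quantifier-free pp definable relations over `C°`) are exactly the relations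
closed under the centralizer `C* = Pol C•`. -/
def SDC (C : OpFamily A) : Prop :=
  ∀ n, 1 ≤ n → qfDef (Ccirc C) n = InvRels (PolOps (Cdot C)) n

/-- The subalgebra of `A^k` generated by `S` (w.r.t. the operations of `C`). -/
def Gen (C : OpFamily A) (k : ℕ) (S : Set (Fin k → A)) : Set (Fin k → A) :=
  ⋂₀ { B | ClosedUnder C k B ∧ S ⊆ B }

/-- The algebra with clone of term operations `C` is injective in `SP_fin(A)`,
the class of subalgebras of finite direct powers of `A`: every homomorphism from
a subalgebra `B ≤ B' ≤ A^m` to `A` extends to a homomorphism `B' → A`. -/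
def InjSPfin (C : OpFamily A) : Prop :=
  ∀ m, 1 ≤ m → ∀ B B' : Set (Fin m → A), ClosedUnder C m B → ClosedUnder C m B' → B ⊆ B' →
    ∀ h : Op A m, IsHomOn C B h →
      ∃ g : Op A m, (∀ x ∈ B, g x = h x) ∧ IsHomOn C B' g

end PaperPH

open PaperPH

namespace PaperPH

variable {A : Type*}

/-- `h` (relevant on `B ⊆ A^k`) is a homomorphism of first-order structures from the
substructure `B` of `⟨A;F;R⟩^k` to `⟨A;F;R⟩`: it commutes with the operations of `F`
and preserves the relations of `R`. -/
def StrHomOn (F : OpFamily A) (R : RelFamily A) {k : ℕ}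
    (B : Set (Fin k → A)) (h : Op A k) : Prop :=
  IsHomOn F B h ∧ ∀ n, ∀ ρ ∈ R n, pPreserves B h ρ

/-- The first-order structure `⟨A;F;R⟩` is `k`-polymorphism-homogeneous: every
homomorphism from a finitely generated substructure of the `k`-th power to the
structure extends to a homomorphism defined on the whole `k`-th power. -/
def StructPolyHomAt (F : OpFamily A) (R : RelFamily A) (k : ℕ) : Prop :=
  ∀ S : Set (Fin k → A), S.Finite →
    ∀ h : Op A k, StrHomOn F R (Gen F k S) h →
      ∃ g : Op A k, (∀ x ∈ Gen F k S, g x = h x) ∧ StrHomOn F R Set.univ g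

/-- The first-order structure `⟨A;F;R⟩` is polymorphism-homogeneous. -/
def StructPolyHom (F : OpFamily A) (R : RelFamily A) : Prop :=
  ∀ k, 1 ≤ k → StructPolyHomAt F R k

/-- The operations of the `k`-th direct power of `⟨A;F;R⟩`, acting componentwise. -/
def powerOps (F : OpFamily A) (k : ℕ) : OpFamily (Fin k → A) := fun n =>
  { fc | ∃ f ∈ F n, fc = fun (M : Fin n → Fin k → A) (j : Fin k) => f (fun i => M i j) }

/-- The relations of the `k`-th direct power of `⟨A;F;R⟩`, defined componentwise. -/
def powerRels (R : RelFamily A) (k : ℕ) : RelFamily (Fin k → A) := fun n =>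
  { ρ' | ∃ ρ ∈ R n, ρ' = { M : Fin n → Fin k → A | ∀ j, (fun i => M i j) ∈ ρ } }

/-- A first-order structure is homomorphism-homogeneous if it is
`1`-polymorphism-homogeneous. -/
def StructHomHom (F : OpFamily A) (R : RelFamily A) : Prop :=
  StructPolyHomAt F R 1

end PaperPH

namespace PaperPH

variable {A : Type*}

/-- Embedding of `A^k` into the universe of the first power `(A^k)^1`. -/
def emb (k : ℕ) : (Fin k → A) → (Fin 1 → Fin k → A) := fun x _ => x

lemma emb_surj {k : ℕ} (M : Fin 1 → Fin k → A) : emb (A := A) k (M 0) = M := by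
  funext j
  have : j = 0 := Subsingleton.elim _ _
  rw [this]; rfl

lemma gen_closed (C : OpFamily A) (k : ℕ) (S : Set (Fin k → A)) :
    ClosedUnder C k (Gen C k S) := by
  intro n f hf M hM B hB
  exact hB.1 n f hf M (fun i => hM i B hB)

lemma subset_gen (C : OpFamily A) (k : ℕ) (S : Set (Fin k → A)) : S ⊆ Gen C k S :=
  fun _ hx _ hB => hB.2 hx

lemma gen_power (F : OpFamily A) (k : ℕ) (S : Set (Fin k → A)) :
    Gen (powerOps F k) 1 (emb k '' S) = emb k '' Gen F k S := by
  apply Set.Subset.antisymm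
  · intro M hM
    refine hM (emb k '' Gen F k S) ⟨?_, Set.image_mono (subset_gen F k S)⟩
    rintro n f' ⟨f, hf, rfl⟩ N hN
    choose x hx hex using hN
    refine ⟨fun l => f fun i => x i l, gen_closed F k S n f hf _ hx, ?_⟩
    funext j l
    show f (fun i => x i l) = f (fun i => N i j l)
    congr 1
    funext i
    rw [← hex i]
    rfl
  · rintro _ ⟨x, hx, rfl⟩ B' hB'
    refine hx (emb k ⁻¹' B') ⟨?_, fun s hs => hB'.2 ⟨s, hs, rfl⟩⟩
    intro n f hf M hM
    exact hB'.1 n (fun N j => f fun i => N i j) ⟨f, hf, rfl⟩ (fun i => emb k (M i)) hM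

end PaperPH

/-- A first-order structure `A = ⟨A;F;R⟩` is polymorphism-homogeneous
iff `A^k` is homomorphism-homogeneous for every natural number `k`. -/
theorem structPolyHom_iff_powers_homHom (A : Type*) (F : OpFamily A) (R : RelFamily A) :
    StructPolyHom F R ↔
      ∀ k, 1 ≤ k → StructHomHom (powerOps F k) (powerRels R k) := by
  constructor
  · -- polymorphism-homogeneous → every power is homomorphism-homogeneous
    intro hPH k hk S' hS' h' hh'
    set S : Set (Fin k → A) := (fun M => M 0) '' S' with hSdef
    have hSfin : S.Finite := hS'.image _
    have hS'eq : emb k '' S = S' := by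
      ext M
      constructor
      · rintro ⟨x, ⟨N, hN, rfl⟩, rfl⟩
        rwa [emb_surj]
      · intro hM
        exact ⟨M 0, ⟨M, hM, rfl⟩, emb_surj M⟩
    have hGen : Gen (powerOps F k) 1 S' = emb k '' Gen F k S := by
      rw [← hS'eq]; exact gen_power F k S
    have hrows : ∀ (n : ℕ) (M : Fin n → Fin k → A), (∀ i, M i ∈ Gen F k S) →
        ∀ i, emb k (M i) ∈ Gen (powerOps F k) 1 S' := by
      intro n M hM i
      rw [hGen]
      exact ⟨M i, hM i, rfl⟩
    have hcomp : ∀ l : Fin k, StrHomOn F R (Gen F k S) (fun x => h' (emb k x) l) := by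
      intro l
      constructor
      · intro n f hf M hM
        exact congrFun (hh'.1 n (fun N j => f fun i => N i j) ⟨f, hf, rfl⟩
          (fun i => emb k (M i)) (hrows n M hM)) l
      · intro n ρ hρ M hM hcols
        exact hh'.2 (n := n) _ ⟨ρ, hρ, rfl⟩ (fun i => emb k (M i)) (hrows n M hM)
          (fun _ l' => hcols l') l
    have hext := fun l : Fin k => hPH k hk S hSfin _ (hcomp l)
    choose g hg1 hg2 using hext
    refine ⟨fun M l => g l (M 0), ?_, ?_, ?_⟩
    · intro M hM
      rw [hGen] at hM
      obtain ⟨x, hx, rfl⟩ := hM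
      funext l
      exact hg1 l x hx
    · rintro n f' ⟨f, hf, rfl⟩ N hN
      funext l
      exact (hg2 l).1 n f hf (fun i => N i 0) (fun _ => trivial)
    · rintro n ρ' ⟨ρ, hρ, rfl⟩ N hN hcols l
      exact (hg2 l).2 n ρ hρ (fun i => N i 0) (fun _ => trivial) (hcols 0)
  · -- every power homomorphism-homogeneous → polymorphism-homogeneous
    intro hHH k hk S hSfin h hh
    have l0 : Fin k := ⟨0, hk⟩
    have hGen : Gen (powerOps F k) 1 (emb k '' S) = emb k '' Gen F k S := gen_power F k S
    have hrows : ∀ (n : ℕ) (N : Fin n → Fin 1 → Fin k → A),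
        (∀ i, N i ∈ Gen (powerOps F k) 1 (emb k '' S)) → ∀ i, N i 0 ∈ Gen F k S := by
      intro n N hN i
      have := hN i
      rw [hGen] at this
      obtain ⟨x, hx, he⟩ := this
      have hx0 : N i 0 = x := by rw [← he]; rfl
      rwa [hx0]
    have hh' : StrHomOn (powerOps F k) (powerRels R k) (Gen (powerOps F k) 1 (emb k '' S))
        (fun M _ => h (M 0)) := by
      constructor
      · rintro n f' ⟨f, hf, rfl⟩ N hN
        funext l
        exact hh.1 n f hf (fun i => N i 0) (hrows n N hN)
      · rintro n ρ' ⟨ρ, hρ, rfl⟩ N hN hcols l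
        exact hh.2 n ρ hρ (fun i => N i 0) (hrows n N hN) (hcols 0)
    obtain ⟨g', hg1, hg2⟩ := hHH k hk (emb k '' S) (hSfin.image _) _ hh'
    refine ⟨fun x => g' (emb k x) l0, ?_, ?_, ?_⟩
    · intro x hx
      have hmem : emb k x ∈ Gen (powerOps F k) 1 (emb k '' S) := by
        rw [hGen]; exact ⟨x, hx, rfl⟩
      exact congrFun (hg1 (emb k x) hmem) l0
    · intro n f hf M hM
      exact congrFun (hg2.1 n (fun N j => f fun i => N i j) ⟨f, hf, rfl⟩
        (fun i => emb k (M i)) (fun _ => trivial)) l0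
    · intro n ρ hρ M hM hcols
      exact hg2.2 (n := n) _ ⟨ρ, hρ, rfl⟩ (fun i => emb k (M i)) (fun _ => trivial)
        (fun _ l' => hcols l') l0
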